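/- For every positive integer n, the meromorphically continued function ζ_ℤ(s) = Γ(1/2 − s)/(4^s √π Γ(1 − s)) vanishes at s = n and its derivative there equals ζ_ℤ'(n) = (1/n) · binom(2n, n)^{-1}. -/

import Mathlib

lemma sqrt_pi_complex : ((Real.sqrt Real.pi : ℝ) : ℂ) = (Real.pi : ℂ) ^ (1/2 : ℂ) := by
  rw [show (1/2 : ℂ) = ((1/2:ℝ):ℂ) by norm_num, ← Complex.ofReal_cpow Real.pi_pos.le]
  norm_num [Real.sqrt_eq_rpow]

lemma Gamma_half : Complex.Gamma (1/2) = ((Real.sqrt Real.pi : ℝ) : ℂ) := by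
  rw [Complex.Gamma_one_half_eq, sqrt_pi_complex]

/-- Γ(1/2 − n) = (−4)^n n! √π / (2n)! -/
lemma Gamma_half_sub_nat (n : ℕ) :
    Complex.Gamma (1/2 - n) =
      ((-4 : ℂ))^n * (n.factorial : ℂ) / ((2*n).factorial : ℂ) * (Real.sqrt Real.pi : ℂ) := by
  induction n with
  | zero => simpa using Gamma_half
  | succ n ih =>
    set s : ℂ := 1/2 - ((n:ℂ)+1) with hs_def
    have hs : s ≠ 0 := by
      have h : s = -(((2*n+1:ℕ):ℂ))/2 := by rw [hs_def]; push_cast; ring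
      rw [h]
      exact div_ne_zero (neg_ne_zero.mpr (Nat.cast_ne_zero.mpr (by omega))) two_ne_zero
    have key : Complex.Gamma (1/2 - (n:ℂ)) = s * Complex.Gamma s := by
      rw [show ((1:ℂ)/2 - (n:ℂ)) = s + 1 by rw [hs_def]; ring, Complex.Gamma_add_one s hs]
    have hGs : Complex.Gamma s =
        ((-4:ℂ))^n * (n.factorial : ℂ) / ((2*n).factorial : ℂ) * (Real.sqrt Real.pi : ℂ) / s := by
      rw [eq_div_iff hs]
      linear_combination ih - key
    have harg : ((1:ℂ)/2 - ((n+1:ℕ):ℂ)) = s := by rw [hs_def]; push_cast; ring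
    rw [harg, hGs, div_eq_iff hs]
    have h1 : ((2*(n+1)).factorial : ℂ) = (2*(n:ℂ)+2) * (2*(n:ℂ)+1) * ((2*n).factorial : ℂ) := by
      have he : 2*(n+1) = (2*n+1) + 1 := by ring
      rw [he, Nat.factorial_succ, Nat.factorial_succ]
      push_cast
      ring
    have h2 : ((n+1).factorial : ℂ) = ((n:ℂ)+1) * (n.factorial : ℂ) := by
      rw [Nat.factorial_succ]; push_cast; ring
    have hf1 : ((2*n).factorial : ℂ) ≠ 0 := Nat.cast_ne_zero.mpr (Nat.factorial_ne_zero _)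
    have hne1 : (2*(n:ℂ)+2) ≠ 0 := by
      have h : (2*(n:ℂ)+2) = ((2*n+2:ℕ):ℂ) := by push_cast; ring
      rw [h]; exact Nat.cast_ne_zero.mpr (by omega)
    have hne2 : (2*(n:ℂ)+1) ≠ 0 := by
      have h : (2*(n:ℂ)+1) = ((2*n+1:ℕ):ℂ) := by push_cast; ring
      rw [h]; exact Nat.cast_ne_zero.mpr (by omega)
    rw [h1, h2, hs_def]
    field_simp
    have hne3 : (1 + (n:ℂ)*2) ≠ 0 := by rw [add_comm, mul_comm]; exact hne2
    linear_combination (-((n.factorial:ℂ) * (-4)^n * 4)) * mul_inv_cancel₀ hne3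
  
noncomputable def zetaZ (s : ℂ) : ℂ :=
  Complex.Gamma (1/2 - s) / ((4:ℂ) ^ s * (Real.sqrt Real.pi : ℂ) * Complex.Gamma (1 - s))


lemma zetaZ_eq_of_re_pos {s : ℂ} (hs : 0 < s.re) :
    zetaZ s = (Complex.Gamma (1/2 - s) * ((4:ℂ)^s * (Real.sqrt Real.pi : ℂ))⁻¹ *
        Complex.Gamma s / (Real.pi : ℂ)) * Complex.sin ((Real.pi : ℂ) * s) := by
  have hGs : Complex.Gamma s ≠ 0 := Complex.Gamma_ne_zero_of_re_pos hs
  have hpi : (Real.pi : ℂ) ≠ 0 := Complex.ofReal_ne_zero.mpr Real.pi_ne_zero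
  have hinv : (Complex.Gamma (1 - s))⁻¹ =
      Complex.sin ((Real.pi : ℂ) * s) * Complex.Gamma s / (Real.pi : ℂ) := by
    by_cases hsin : Complex.sin ((Real.pi : ℂ) * s) = 0
    · obtain ⟨k, hk⟩ := Complex.sin_eq_zero_iff.mp hsin
      have hsk : s = (k : ℂ) := by
        have : (Real.pi : ℂ) * s = (Real.pi : ℂ) * (k : ℂ) := by rw [hk]; ring
        exact mul_left_cancel₀ hpi this
      have hkpos : 0 < k := by
        have : (0:ℝ) < (k:ℝ) := by
          have := hs; rw [hsk] at this; simpa using this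
        exact_mod_cast this
      have hG0 : Complex.Gamma (1 - s) = 0 := by
        rw [Complex.Gamma_eq_zero_iff]
        refine ⟨(k-1).toNat, ?_⟩
        have h' : (((k-1).toNat : ℕ) : ℂ) = (k:ℂ) - 1 := by
          have := Int.toNat_of_nonneg (show (0:ℤ) ≤ k - 1 by omega)
          exact_mod_cast congrArg (Int.cast : ℤ → ℂ) this
        rw [hsk, h']; ring
      rw [hG0, hsin]; simp
    · have hG1s : Complex.Gamma (1 - s) ≠ 0 := by
        rw [Ne, Complex.Gamma_eq_zero_iff]
        rintro ⟨m, hm⟩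
        apply hsin
        have hsm : s = ((m+1 : ℕ) : ℂ) := by push_cast; linear_combination -hm
        rw [Complex.sin_eq_zero_iff]
        exact ⟨(m+1 : ℕ), by rw [hsm]; push_cast; ring⟩
      have hrefl := Complex.Gamma_mul_Gamma_one_sub s
      have hG1eq : Complex.Gamma (1-s) =
          (Real.pi:ℂ) / (Complex.sin ((Real.pi:ℂ) * s) * Complex.Gamma s) := by
        rw [eq_div_iff (mul_ne_zero hsin hGs)]
        rw [eq_div_iff hsin] at hrefl
        linear_combination hrefl
      rw [hG1eq, inv_div]
  rw [zetaZ, div_eq_mul_inv, mul_inv, hinv]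
  ring

theorem zetaZ_pos_int (n : ℕ) (hn : 1 ≤ n) :
    zetaZ (n : ℂ) = 0 ∧
    deriv zetaZ (n : ℂ) = (1 / (n : ℂ)) * (Nat.choose (2 * n) n : ℂ)⁻¹ := by
  have hzero : Complex.Gamma (1 - (n:ℂ)) = 0 := by
    rw [Complex.Gamma_eq_zero_iff]
    exact ⟨n - 1, by push_cast [Nat.cast_sub hn]; ring⟩
  constructor
  · rw [zetaZ, hzero, mul_zero, div_zero]
  · have hre : (0:ℝ) < (n:ℂ).re := by
      simp only [Complex.natCast_re]
      exact_mod_cast Nat.pos_of_ne_zero (by omega)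
    have hev : zetaZ =ᶠ[nhds (n:ℂ)]
        fun s => (Complex.Gamma (1/2 - s) * ((4:ℂ)^s * (Real.sqrt Real.pi : ℂ))⁻¹ *
          Complex.Gamma s / (Real.pi : ℂ)) * Complex.sin ((Real.pi : ℂ) * s) := by
      have hopen : IsOpen {s : ℂ | 0 < s.re} := isOpen_lt continuous_const Complex.continuous_re
      filter_upwards [hopen.mem_nhds hre] with s hs
      exact zetaZ_eq_of_re_pos hs
    rw [hev.deriv_eq]
    set h : ℂ → ℂ := fun s => Complex.Gamma (1/2 - s) * ((4:ℂ)^s * (Real.sqrt Real.pi : ℂ))⁻¹ *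
      Complex.Gamma s / (Real.pi : ℂ) with hh
    have hsqrt : ((Real.sqrt Real.pi : ℝ) : ℂ) ≠ 0 :=
      Complex.ofReal_ne_zero.mpr (ne_of_gt (Real.sqrt_pos.mpr Real.pi_pos))
    have hpow_ne : ∀ s : ℂ, (4:ℂ)^s * (Real.sqrt Real.pi : ℂ) ≠ 0 := by
      intro s
      refine mul_ne_zero ?_ hsqrt
      intro hc
      rw [Complex.cpow_eq_zero_iff] at hc
      norm_num at hc
    have hdh : DifferentiableAt ℂ h (n:ℂ) := by
      have hd1 : DifferentiableAt ℂ (fun s : ℂ => Complex.Gamma (1/2 - s)) (n:ℂ) := by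
        have hlin : DifferentiableAt ℂ (fun s : ℂ => 1/2 - s) (n:ℂ) :=
          (differentiableAt_const _).sub differentiableAt_id
        refine (Complex.differentiableAt_Gamma _ ?_).comp _ hlin
        intro m hm
        have h3 : ((1:ℂ) - 2*n) = ((1 - 2*(n:ℤ) : ℤ) : ℂ) := by push_cast; ring
        have h4 : (2 * (-(m:ℂ))) = ((-(2*(m:ℤ)) : ℤ) : ℂ) := by push_cast; ring
        have h5 : ((1 - 2*(n:ℤ) : ℤ) : ℂ) = ((-(2*(m:ℤ)) : ℤ) : ℂ) := by
          rw [← h3, ← h4]; linear_combination 2 * hm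
        have := Int.cast_injective (α := ℂ) h5
        omega
      have hd2 : DifferentiableAt ℂ (fun s : ℂ => ((4:ℂ)^s * (Real.sqrt Real.pi : ℂ))⁻¹) (n:ℂ) := by
        have hb : DifferentiableAt ℂ (fun s : ℂ => (4:ℂ)^s * (Real.sqrt Real.pi : ℂ)) (n:ℂ) :=
          (differentiableAt_id.const_cpow (Or.inl (by norm_num))).mul (differentiableAt_const _)
        exact hb.inv (hpow_ne _)
      have hd3 : DifferentiableAt ℂ Complex.Gamma (n:ℂ) := by
        apply Complex.differentiableAt_Gamma
        intro m hm
        have h5 : (((n:ℤ) : ℤ) : ℂ) = ((-(m:ℤ) : ℤ) : ℂ) := by push_cast; linear_combination hm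
        have := Int.cast_injective (α := ℂ) h5
        omega
      exact ((hd1.mul hd2).mul hd3).div_const _
    have hsinD : HasDerivAt (fun s : ℂ => Complex.sin ((Real.pi:ℂ) * s))
        (Complex.cos ((Real.pi:ℂ) * n) * (Real.pi:ℂ)) (n:ℂ) := by
      have h1 : HasDerivAt (fun s : ℂ => (Real.pi:ℂ) * s) (Real.pi:ℂ) (n:ℂ) := by
        simpa using (hasDerivAt_id (n:ℂ)).const_mul (Real.pi:ℂ)
      exact (Complex.hasDerivAt_sin _).comp _ h1
    have hprod : HasDerivAt (fun s => h s * Complex.sin ((Real.pi:ℂ) * s))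
        (deriv h (n:ℂ) * Complex.sin ((Real.pi:ℂ) * n) +
          h (n:ℂ) * (Complex.cos ((Real.pi:ℂ) * n) * (Real.pi:ℂ))) (n:ℂ) :=
      hdh.hasDerivAt.mul hsinD
    rw [hprod.deriv]
    have hsin0 : Complex.sin ((Real.pi:ℂ) * n) = 0 := by
      rw [mul_comm, ← Complex.ofReal_natCast, ← Complex.ofReal_mul, ← Complex.ofReal_sin,
        Real.sin_nat_mul_pi, Complex.ofReal_zero]
    have hcos : Complex.cos ((Real.pi:ℂ) * n) = (-1:ℂ)^n := by
      rw [mul_comm, ← Complex.ofReal_natCast, ← Complex.ofReal_mul, ← Complex.ofReal_cos]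
      have h0 := Real.cos_nat_mul_pi_sub 0 n
      simp only [sub_zero, Real.cos_zero, mul_one] at h0
      rw [h0]; push_cast; ring
    rw [hsin0, hcos, mul_zero, zero_add, hh]
    simp only
    have hGn : Complex.Gamma (n:ℂ) = ((n-1).factorial : ℂ) := by
      have he : ((n:ℂ)) = ((n-1 : ℕ) : ℂ) + 1 := by push_cast [Nat.cast_sub hn]; ring
      rw [he, Complex.Gamma_nat_eq_factorial]
    have hG12 := Gamma_half_sub_nat n
    have h4 : ((4:ℂ)^(n:ℂ)) = (4:ℂ)^n := Complex.cpow_natCast 4 n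
    rw [hGn, hG12, h4]
    have hchoose := Nat.choose_mul_factorial_mul_factorial
      (Nat.le_mul_of_pos_left n (by norm_num) : n ≤ 2*n)
    rw [show 2*n - n = n by omega] at hchoose
    have hch : ((2*n).factorial : ℂ) =
        (((2*n).choose n : ℕ) : ℂ) * (n.factorial : ℂ) * ((n).factorial : ℂ) := by
      exact_mod_cast congrArg (Nat.cast : ℕ → ℂ) hchoose.symm
    have hnn : (n:ℂ) ≠ 0 := Nat.cast_ne_zero.mpr (by omega)
    have hfac : (n.factorial : ℂ) ≠ 0 := Nat.cast_ne_zero.mpr (Nat.factorial_ne_zero _)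
    have hfac2 : ((2*n).factorial : ℂ) ≠ 0 := Nat.cast_ne_zero.mpr (Nat.factorial_ne_zero _)
    have hchne : (((2*n).choose n : ℕ) : ℂ) ≠ 0 :=
      Nat.cast_ne_zero.mpr (Nat.choose_pos (Nat.le_mul_of_pos_left n (by norm_num))).ne'
    have hpi : ((Real.pi : ℝ) : ℂ) ≠ 0 := Complex.ofReal_ne_zero.mpr Real.pi_ne_zero
    have h4n : ((4:ℂ)^n) ≠ 0 := pow_ne_zero _ (by norm_num)
    have hnfac : (n.factorial : ℂ) = (n:ℂ) * ((n-1).factorial : ℂ) := by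
      have he : n = (n-1) + 1 := by omega
      have : (n.factorial : ℂ) = (((n-1)+1).factorial : ℂ) := by rw [← he]
      rw [this, Nat.factorial_succ]
      push_cast [Nat.cast_sub hn]
      ring
    have hneg4 : ((-4:ℂ))^n = (-1:ℂ)^n * (4:ℂ)^n := by rw [← neg_one_mul, mul_pow]
    have hsq : ((-1:ℂ))^n * (-1:ℂ)^n = 1 := by
      rw [← pow_add]
      exact (neg_one_pow_eq_one_iff_even (by norm_num)).mpr ⟨n, by ring⟩
    rw [hch] at *
    field_simp [hnfac, hneg4]
    ring_nf
    rw [hnfac, hneg4]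
    linear_combination (((n-1).factorial : ℂ) * n * 4^n) * hsq
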